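/- There is an instance with n voters (n = 16t² for positive integer t) and committee size k = n/2 on which: (a) some JR committee has social welfare Θ(n√n) (at least (n/4)·√n), while (b) GreedyCC with adversarial tie-breaking outputs a committee of social welfare O(n). Concretely: voters are vertices of a graph with clique L (|L| = n/2) and independent set R (|R| = n/2) joined by a perfect matching; candidates are the edges plus a set S of n/4 candidates each approved by the same fixed √n voters of R. The committee consisting of S together with a perfect matching of L provides JR and has social welfare ≥ (n/4)√n + n/2; GreedyCC can end with each selected candidate contributing at most √n approvals after covering, yielding total welfare at most 2(n/2) + √n·(√n) = O(n). -/

import Mathlib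

/-- Social welfare of a committee `W`. -/
def swF {V C : Type*} [Fintype V] [DecidableEq C] (A : V → Finset C) (W : Finset C) : ℕ :=
  ∑ i : V, ((A i) ∩ W).card

/-- `W` provides justified representation. -/
def providesJR {V C : Type*} [Fintype V] [DecidableEq C] (A : V → Finset C) (k : ℕ)
    (W : Finset C) : Prop :=
  ∀ N' : Finset V, Fintype.card V ≤ k * N'.card →
    (∃ c : C, ∀ i ∈ N', c ∈ A i) → ∃ i ∈ N', ((A i) ∩ W).Nonempty

/-- Number of voters newly covered by candidate `c` given the committee `W`. -/
def newcov {V C : Type*} [Fintype V] [DecidableEq C] (A : V → Finset C) (c : C)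
    (W : Finset C) : ℕ :=
  (Finset.univ.filter (fun i : V => c ∈ A i ∧ ((A i) ∩ W) = ∅)).card

/-- `W` is a possible output of GreedyCC (with some tie-breaking): there is an
order `w` of its `k` members and a first-stage length `k'` such that each
first-stage candidate covers the maximum number (and at least `n/k = 2`) of new
voters, and after the first stage no candidate covers `≥ 2` new voters. -/
def IsGreedyCCRun {V C : Type*} [Fintype V] [DecidableEq C] (A : V → Finset C)
    (k : ℕ) (W : Finset C) : Prop :=
  ∃ w : Fin k → C, Function.Injective w ∧ W = Finset.image w Finset.univ ∧
    ∃ k' : ℕ, k' ≤ k ∧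
      (∀ j : Fin k, (j : ℕ) < k' →
        2 ≤ newcov A (w j) ((Finset.univ.filter (fun j' : Fin k => j' < j)).image w) ∧
        ∀ c : C, newcov A c ((Finset.univ.filter (fun j' : Fin k => j' < j)).image w) ≤
          newcov A (w j) ((Finset.univ.filter (fun j' : Fin k => j' < j)).image w)) ∧
      ∀ c : C, newcov A c
        ((Finset.univ.filter (fun j' : Fin k => (j' : ℕ) < k')).image w) < 2

namespace S12

def edg (t : ℕ) (i : Fin (4*t^2)) : Sym2 (Fin (8*t^2)) :=
  s(⟨2*i, by have h := i.isLt; omega⟩, ⟨2*i+1, by have h := i.isLt; omega⟩)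

lemma mem_edg {t : ℕ} {v : Fin (8*t^2)} {i : Fin (4*t^2)} :
    v ∈ edg t i ↔ ((v:ℕ) = 2*i ∨ (v:ℕ) = 2*i+1) := by
  simp [edg, Sym2.mem_iff, Fin.ext_iff]

lemma edg_not_diag {t : ℕ} (i : Fin (4*t^2)) : ¬ (edg t i).IsDiag := by
  simp [edg, Sym2.mk_isDiag_iff, Fin.ext_iff]

lemma edg_inj (t : ℕ) : Function.Injective (edg t) := by
  intro a b h
  simp only [edg, Sym2.eq_iff, Fin.ext_iff] at h
  simp only [Fin.ext_iff]
  omega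

def gw (t : ℕ) (j : Fin (8*t^2)) : Sym2 (Fin (8*t^2)) ⊕ Fin (8*t^2) ⊕ Fin (4*t^2) :=
  if h : (j:ℕ) = 0 then Sum.inr (Sum.inr ⟨0, by have := j.isLt; omega⟩)
  else if h2 : (j:ℕ) < 4*t^2+1 then Sum.inl (edg t ⟨(j:ℕ)-1, by omega⟩)
  else Sum.inl (Sym2.diag ⟨(j:ℕ)-(4*t^2+1), by have := j.isLt; omega⟩)

set_option linter.unreachableTactic false in
set_option linter.unusedTactic false in
lemma gw_inj (t : ℕ) : Function.Injective (gw t) := by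
  intro a b h
  unfold gw at h
  split_ifs at h with h1 h2 h3 h4 h5 <;>
    simp_all [Fin.ext_iff, edg_inj t |>.eq_iff, Sym2.diag_injective.eq_iff] <;>
  first
    | omega
    | (exact absurd (h ▸ Sym2.diag_isDiag _) (edg_not_diag _))
    | (exact absurd (h.symm ▸ Sym2.diag_isDiag _) (edg_not_diag _))

end S12

open S12 Finset

/-- The instance separating GreedyCC from the optimal JR social welfare:
`n = 16t²` voters (`L ⊕ R`, each of size `n/2 = 8t²`), candidates are clique
edges inside `L` (non-diagonal `Sym2`), the perfect matching edges between `L`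
and `R` (`Fin (8t²)`), and a set `S` of `n/4 = 4t²` candidates each approved by
the same `√n = 4t` voters of `R`; committee size `k = n/2 = 8t²`. Some JR
committee has social welfare at least `(n/4)·√n + n/2 = 16t³ + 8t²`, while some
GreedyCC run outputs a committee of social welfare at most `2n = 32t²`. -/
theorem stmt12 (t : ℕ) (ht : 0 < t)
    (A : Fin (8 * t ^ 2) ⊕ Fin (8 * t ^ 2) →
      Finset (Sym2 (Fin (8 * t ^ 2)) ⊕ Fin (8 * t ^ 2) ⊕ Fin (4 * t ^ 2)))
    (h1 : ∀ (v : Fin (8 * t ^ 2)) (e : Sym2 (Fin (8 * t ^ 2))),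
      Sum.inl e ∈ A (Sum.inl v) ↔ (v ∈ e ∧ ¬ e.IsDiag))
    (h2 : ∀ (v j : Fin (8 * t ^ 2)), Sum.inr (Sum.inl j) ∈ A (Sum.inl v) ↔ j = v)
    (h3 : ∀ (v : Fin (8 * t ^ 2)) (j : Fin (4 * t ^ 2)),
      Sum.inr (Sum.inr j) ∉ A (Sum.inl v))
    (h4 : ∀ (v : Fin (8 * t ^ 2)) (e : Sym2 (Fin (8 * t ^ 2))),
      Sum.inl e ∉ A (Sum.inr v))
    (h5 : ∀ (v j : Fin (8 * t ^ 2)), Sum.inr (Sum.inl j) ∈ A (Sum.inr v) ↔ j = v)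
    (h6 : ∀ (v : Fin (8 * t ^ 2)) (j : Fin (4 * t ^ 2)),
      Sum.inr (Sum.inr j) ∈ A (Sum.inr v) ↔ (v : ℕ) < 4 * t) :
    (∃ W, W.card = 8 * t ^ 2 ∧ providesJR A (8 * t ^ 2) W ∧
      16 * t ^ 3 + 8 * t ^ 2 ≤ swF A W) ∧
    (∃ W, W.card = 8 * t ^ 2 ∧ IsGreedyCCRun A (8 * t ^ 2) W ∧
      swF A W ≤ 32 * t ^ 2) := by
  constructor
  · -- part (a)
    classical
    have ht2 : 0 < t^2 := by positivity
    set SC : Fin (4*t^2) → (Sym2 (Fin (8*t^2)) ⊕ Fin (8*t^2) ⊕ Fin (4*t^2)) :=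
      fun j => Sum.inr (Sum.inr j) with hSC
    have hSCinj : Function.Injective SC := fun a b h => by simpa [hSC] using h
    have hEinj : Function.Injective (fun i : Fin (4*t^2) =>
        (Sum.inl (edg t i) : Sym2 (Fin (8*t^2)) ⊕ Fin (8*t^2) ⊕ Fin (4*t^2))) := by
      intro a b h
      exact edg_inj t (Sum.inl_injective h)
    refine ⟨(univ.image SC) ∪ (univ.image (fun i => Sum.inl (edg t i))), ?_, ?_, ?_⟩
    · rw [card_union_of_disjoint, card_image_of_injective _ hSCinj,
        card_image_of_injective _ hEinj, card_univ, Fintype.card_fin]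
      · ring
      · rw [disjoint_left]
        rintro c hc hc'
        simp only [mem_image, hSC] at hc hc'
        obtain ⟨a, _, rfl⟩ := hc
        obtain ⟨b, _, hb⟩ := hc'
        exact Sum.inl_ne_inr hb
    · -- providesJR
      intro N' hNcard ⟨c, hc⟩
      have hV : Fintype.card (Fin (8*t^2) ⊕ Fin (8*t^2)) = 16*t^2 := by
        simp [Fintype.card_sum]; ring
      rw [hV] at hNcard
      have hN2 : 2 ≤ N'.card := by nlinarith [N'.card.le_refl]
      by_cases hL : ∃ v, Sum.inl v ∈ N'
      · obtain ⟨v, hv⟩ := hL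
        refine ⟨Sum.inl v, hv, Sum.inl (edg t ⟨(v:ℕ)/2, by have := v.isLt; omega⟩), ?_⟩
        rw [mem_inter]
        constructor
        · rw [h1]
          exact ⟨mem_edg.2 (by simp only [Fin.val_mk]; omega), edg_not_diag _⟩
        · exact mem_union_right _ (mem_image_of_mem _ (mem_univ _))
      · push_neg at hL
        obtain ⟨a, ha, b, hb, hab⟩ := Finset.one_lt_card.1 hN2
        obtain ⟨v₁, rfl⟩ : ∃ v, a = Sum.inr v := by
          cases a with
          | inl v => exact absurd ha (hL v)
          | inr v => exact ⟨v, rfl⟩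
        obtain ⟨v₂, rfl⟩ : ∃ v, b = Sum.inr v := by
          cases b with
          | inl v => exact absurd hb (hL v)
          | inr v => exact ⟨v, rfl⟩
        match c with
        | Sum.inl e => exact absurd (hc _ ha) (h4 _ _)
        | Sum.inr (Sum.inl m) =>
          have e1 := (h5 v₁ m).1 (hc _ ha)
          have e2 := (h5 v₂ m).1 (hc _ hb)
          exact absurd (by rw [← e1, ← e2]) hab
        | Sum.inr (Sum.inr j) =>
          refine ⟨Sum.inr v₁, ha, Sum.inr (Sum.inr j), ?_⟩
          rw [mem_inter]
          exact ⟨hc _ ha, mem_union_left _ (mem_image_of_mem _ (mem_univ _))⟩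
    · -- social welfare
      rw [swF, Fintype.sum_sum_type]
      have hLlb : ∀ v : Fin (8*t^2), 1 ≤ ((A (Sum.inl v)) ∩
          ((univ.image SC) ∪ (univ.image (fun i => Sum.inl (edg t i))))).card := by
        intro v
        refine Finset.card_pos.2 ⟨Sum.inl (edg t ⟨(v:ℕ)/2, by have := v.isLt; omega⟩), ?_⟩
        rw [mem_inter]
        constructor
        · rw [h1]
          exact ⟨mem_edg.2 (by simp only [Fin.val_mk]; omega), edg_not_diag _⟩
        · exact mem_union_right _ (mem_image_of_mem _ (mem_univ _))
      have hRlb : ∀ v : Fin (8*t^2), (v:ℕ) < 4*t → 4*t^2 ≤ ((A (Sum.inr v)) ∩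
          ((univ.image SC) ∪ (univ.image (fun i => Sum.inl (edg t i))))).card := by
        intro v hv
        have hsub : univ.image SC ⊆ (A (Sum.inr v)) ∩
            ((univ.image SC) ∪ (univ.image (fun i => Sum.inl (edg t i)))) := by
          intro c hc
          simp only [mem_image, hSC] at hc
          obtain ⟨j, _, rfl⟩ := hc
          rw [mem_inter]
          exact ⟨(h6 v j).2 hv, mem_union_left _ (mem_image_of_mem _ (mem_univ _))⟩
        calc 4*t^2 = (univ.image SC).card := by
              rw [card_image_of_injective _ hSCinj, card_univ, Fintype.card_fin]
          _ ≤ _ := card_le_card hsub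
      have hfilt : (univ.filter (fun v : Fin (8*t^2) => (v:ℕ) < 4*t)).card = 4*t := by
        have h48 : 4*t < 8*t^2 := by nlinarith
        have heq : univ.filter (fun v : Fin (8*t^2) => (v:ℕ) < 4*t)
            = Finset.Iio (⟨4*t, h48⟩ : Fin (8*t^2)) := by
          ext v
          simp [Fin.lt_def]
        rw [heq, Fin.card_Iio]
      calc 16*t^3 + 8*t^2
          = (∑ _v : Fin (8*t^2), 1) +
            ∑ v : Fin (8*t^2), (if (v:ℕ) < 4*t then 4*t^2 else 0) := by
            rw [Finset.sum_const, Finset.sum_ite, Finset.sum_const, Finset.sum_const_zero,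
              add_zero, smul_eq_mul, smul_eq_mul, hfilt, card_univ, Fintype.card_fin]
            ring
        _ ≤ _ := by
            refine add_le_add (Finset.sum_le_sum fun v _ => hLlb v)
              (Finset.sum_le_sum fun v _ => ?_)
            split_ifs with hv
            · exact hRlb v hv
            · exact Nat.zero_le _
  · -- part (b)
    classical
    have ht2 : 0 < t^2 := by positivity
    have hk : 4*t^2+1 ≤ 8*t^2 := by nlinarith
    -- gw value lemmas
    have hgw0 : ∀ (j : Fin (8*t^2)), (j:ℕ) = 0 →
        gw t j = Sum.inr (Sum.inr (⟨0, by omega⟩ : Fin (4*t^2))) := by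
      intro j hj
      unfold gw
      rw [dif_pos hj]
    have hgwE : ∀ (j : Fin (8*t^2)), (j:ℕ) ≠ 0 → ∀ hj : (j:ℕ) < 4*t^2+1,
        gw t j = Sum.inl (edg t ⟨(j:ℕ)-1, by omega⟩) := by
      intro j hj0 hj
      unfold gw
      rw [dif_neg hj0, dif_pos hj]
    have hgwD : ∀ (j : Fin (8*t^2)), ¬((j:ℕ) < 4*t^2+1) →
        gw t j = Sum.inl (Sym2.diag ⟨(j:ℕ)-(4*t^2+1), by have := j.isLt; omega⟩) := by
      intro j hj
      unfold gw
      rw [dif_neg (by omega), dif_neg hj]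
    -- approver bounds
    have hncle : ∀ (c : Sym2 (Fin (8*t^2)) ⊕ Fin (8*t^2) ⊕ Fin (4*t^2))
        (W : Finset (Sym2 (Fin (8*t^2)) ⊕ Fin (8*t^2) ⊕ Fin (4*t^2)))
        (s : Finset (Fin (8*t^2) ⊕ Fin (8*t^2))),
        (∀ i, c ∈ A i → i ∈ s) → newcov A c W ≤ s.card := by
      intro c W s hs
      unfold newcov
      apply card_le_card
      intro i hi
      rw [mem_filter] at hi
      exact hs i hi.2.1
    have happE : ∀ (e : Sym2 (Fin (8*t^2))) W, newcov A (Sum.inl e) W ≤ 2 := by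
      intro e W
      obtain ⟨⟨a, b⟩, rfl⟩ := e.exists_rep
      refine le_trans (hncle _ W {Sum.inl a, Sum.inl b} ?_) ?_
      · rintro (v|v) hv
        · rw [h1] at hv
          rcases Sym2.mem_iff.1 hv.1 with rfl | rfl <;> simp
        · exact absurd hv (h4 _ _)
      · exact le_trans (card_insert_le _ _) (by simp)
    have happM : ∀ (m : Fin (8*t^2)) W, newcov A (Sum.inr (Sum.inl m)) W ≤ 2 := by
      intro m W
      refine le_trans (hncle _ W {Sum.inl m, Sum.inr m} ?_) ?_
      · rintro (v|v) hv
        · rw [h2] at hv; subst hv; simp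
        · rw [h5] at hv; subst hv; simp
      · exact le_trans (card_insert_le _ _) (by simp)
    refine ⟨univ.image (gw t), ?_, ⟨gw t, gw_inj t, rfl, 4*t^2+1, hk, ?_, ?_⟩, ?_⟩
    · rw [card_image_of_injective _ (gw_inj t), card_univ, Fintype.card_fin]
    · -- first-stage steps
      intro j hj
      by_cases hj0 : (j:ℕ) = 0
      · -- step 0
        have hPempty : (univ.filter (fun j' : Fin (8*t^2) => j' < j)).image (gw t) = ∅ := by
          have hf : univ.filter (fun j' : Fin (8*t^2) => j' < j) = ∅ := by
            rw [filter_eq_empty_iff]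
            intro j' _
            rw [Fin.lt_def, hj0]
            omega
          rw [hf, image_empty]
        rw [hPempty, hgw0 j hj0]
        have h2s0 : 2 ≤ newcov A (Sum.inr (Sum.inr (⟨0, by omega⟩ : Fin (4*t^2)))) ∅ := by
          unfold newcov
          have hsub : ({Sum.inr ⟨0, by omega⟩, Sum.inr ⟨1, by omega⟩} :
              Finset (Fin (8*t^2) ⊕ Fin (8*t^2))) ⊆
              univ.filter (fun i => Sum.inr (Sum.inr (⟨0, by omega⟩ : Fin (4*t^2))) ∈ A i ∧
                A i ∩ ∅ = ∅) := by
            intro i hi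
            rw [mem_filter]
            refine ⟨mem_univ _, ?_, inter_empty _⟩
            rcases mem_insert.1 hi with rfl | hi'
            · rw [h6]; simp; omega
            · rw [mem_singleton.1 hi', h6]; simp; omega
          refine le_trans ?_ (card_le_card hsub)
          rw [card_insert_of_notMem (by simp [Fin.ext_iff]), card_singleton]
        refine ⟨h2s0, ?_⟩
        intro c
        match c with
        | Sum.inl e => exact le_trans (happE e ∅) h2s0
        | Sum.inr (Sum.inl m) => exact le_trans (happM m ∅) h2s0
        | Sum.inr (Sum.inr j') =>
          refine le_of_eq ?_
          unfold newcov
          congr 1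
          apply filter_congr
          rintro (v|v) _
          · simp [h3]
          · simp [h6]
      · -- steps ≥ 1
        have hj1 : 1 ≤ (j:ℕ) := by omega
        set P := (univ.filter (fun j' : Fin (8*t^2) => j' < j)).image (gw t) with hPdef
        have hs0P : Sum.inr (Sum.inr (⟨0, by omega⟩ : Fin (4*t^2))) ∈ P := by
          rw [hPdef, mem_image]
          refine ⟨⟨0, by omega⟩, ?_, hgw0 _ rfl⟩
          rw [mem_filter, Fin.lt_def]
          exact ⟨mem_univ _, by simpa using (show 0 < (j:ℕ) by omega)⟩
        have hRcov : ∀ v : Fin (8*t^2), (v:ℕ) < 4*t → ¬(A (Sum.inr v) ∩ P = ∅) := by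
          intro v hv hemp
          have hm : Sum.inr (Sum.inr (⟨0, by omega⟩ : Fin (4*t^2))) ∈ A (Sum.inr v) ∩ P :=
            mem_inter.2 ⟨(h6 v _).2 hv, hs0P⟩
          rw [hemp] at hm
          exact notMem_empty _ hm
        rw [hgwE j hj0 hj]
        have hElow : 2 ≤ newcov A (Sum.inl (edg t ⟨(j:ℕ)-1, by omega⟩)) P := by
          have hL : ∀ vv : Fin (8*t^2),
              ((vv:ℕ) = 2*((j:ℕ)-1) ∨ (vv:ℕ) = 2*((j:ℕ)-1)+1) →
              (Sum.inl (edg t ⟨(j:ℕ)-1, by omega⟩) ∈ A (Sum.inl vv) ∧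
                A (Sum.inl vv) ∩ P = ∅) := by
            intro vv hvv
            constructor
            · rw [h1]
              exact ⟨mem_edg.2 (by simp only [Fin.val_mk]; omega), edg_not_diag _⟩
            · rw [eq_empty_iff_forall_notMem]
              intro c hcmem
              rw [mem_inter] at hcmem
              obtain ⟨hcA, hcP⟩ := hcmem
              rw [hPdef, mem_image] at hcP
              obtain ⟨j', hj', rfl⟩ := hcP
              rw [mem_filter] at hj'
              have hj'j : (j':ℕ) < (j:ℕ) := (Fin.lt_def).1 hj'.2
              by_cases hj'0 : (j':ℕ) = 0
              · rw [hgw0 j' hj'0] at hcA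
                exact h3 _ _ hcA
              · have hj'lt : (j':ℕ) < 4*t^2+1 := by omega
                rw [hgwE j' hj'0 hj'lt] at hcA
                rw [h1] at hcA
                have hmm := mem_edg.1 hcA.1
                simp only [Fin.val_mk] at hmm
                omega
          have h28 : 2*((j:ℕ)-1) < 8*t^2 := by omega
          have h28' : 2*((j:ℕ)-1)+1 < 8*t^2 := by omega
          have hsub : ({Sum.inl ⟨2*((j:ℕ)-1), h28⟩, Sum.inl ⟨2*((j:ℕ)-1)+1, h28'⟩} :
              Finset (Fin (8*t^2) ⊕ Fin (8*t^2))) ⊆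
              univ.filter (fun i => Sum.inl (edg t ⟨(j:ℕ)-1, by omega⟩) ∈ A i ∧
                A i ∩ P = ∅) := by
            intro i hi
            rw [mem_filter]
            rcases mem_insert.1 hi with rfl | hi'
            · exact ⟨mem_univ _, hL _ (Or.inl rfl)⟩
            · rw [mem_singleton.1 hi']
              exact ⟨mem_univ _, hL _ (Or.inr rfl)⟩
          refine le_trans ?_ (card_le_card hsub)
          rw [card_insert_of_notMem (by simp [Fin.ext_iff]), card_singleton]
        refine ⟨hElow, ?_⟩
        intro c
        match c with
        | Sum.inl e => exact le_trans (happE e P) hElow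
        | Sum.inr (Sum.inl m) => exact le_trans (happM m P) hElow
        | Sum.inr (Sum.inr j') =>
          have h0 : newcov A (Sum.inr (Sum.inr j')) P = 0 := by
            unfold newcov
            rw [card_eq_zero, eq_empty_iff_forall_notMem]
            rintro (v|v) hi <;> rw [mem_filter] at hi
            · exact h3 _ _ hi.2.1
            · exact hRcov v ((h6 v j').1 hi.2.1) hi.2.2
          rw [h0]
          exact Nat.zero_le _
    · -- termination condition
      set P := (univ.filter (fun j' : Fin (8*t^2) => (j':ℕ) < 4*t^2+1)).image (gw t) with hPdef
      have hs0P : Sum.inr (Sum.inr (⟨0, by omega⟩ : Fin (4*t^2))) ∈ P := by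
        rw [hPdef, mem_image]
        refine ⟨⟨0, by omega⟩, ?_, hgw0 _ rfl⟩
        rw [mem_filter]
        exact ⟨mem_univ _, by simp⟩
      have hEP : ∀ i : Fin (4*t^2), Sum.inl (edg t i) ∈ P := by
        intro i
        have hlt : (i:ℕ)+1 < 8*t^2 := by have := i.isLt; omega
        rw [hPdef, mem_image]
        refine ⟨⟨(i:ℕ)+1, hlt⟩, ?_, ?_⟩
        · rw [mem_filter]
          exact ⟨mem_univ _, by simp only [Fin.val_mk]; have := i.isLt; omega⟩
        · rw [hgwE _ (by simp) (by simp only [Fin.val_mk]; have := i.isLt; omega)]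
          exact congrArg Sum.inl (congrArg (edg t) (Fin.ext (by simp)))
      intro c
      have hfilt1 : ∀ i ∈ univ.filter
          (fun i : Fin (8*t^2) ⊕ Fin (8*t^2) => c ∈ A i ∧ A i ∩ P = ∅),
          ∃ v : Fin (8*t^2), i = Sum.inr v ∧ c = Sum.inr (Sum.inl v) := by
        rintro (v|v) hi <;> rw [mem_filter] at hi
        · exfalso
          have hedge : Sum.inl (edg t ⟨(v:ℕ)/2, by have := v.isLt; omega⟩) ∈
              A (Sum.inl v) ∩ P := by
            rw [mem_inter]
            refine ⟨?_, hEP _⟩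
            rw [h1]
            exact ⟨mem_edg.2 (by simp only [Fin.val_mk]; omega), edg_not_diag _⟩
          rw [hi.2.2] at hedge
          exact notMem_empty _ hedge
        · match c, hi.2.1 with
          | Sum.inl e, hcA => exact absurd hcA (h4 _ _)
          | Sum.inr (Sum.inl m), hcA =>
            have := (h5 v m).1 hcA
            subst this
            exact ⟨m, rfl, rfl⟩
          | Sum.inr (Sum.inr j'), hcA =>
            exfalso
            have hv4 := (h6 v j').1 hcA
            have hm : Sum.inr (Sum.inr (⟨0, by omega⟩ : Fin (4*t^2))) ∈
                A (Sum.inr v) ∩ P := mem_inter.2 ⟨(h6 v _).2 hv4, hs0P⟩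
            rw [hi.2.2] at hm
            exact notMem_empty _ hm
      have hle1 : newcov A c P ≤ 1 := by
        unfold newcov
        rw [card_le_one]
        intro a ha b hb
        obtain ⟨v₁, rfl, hc₁⟩ := hfilt1 a ha
        obtain ⟨v₂, rfl, hc₂⟩ := hfilt1 b hb
        rw [hc₁] at hc₂
        simp only [Sum.inr.injEq, Sum.inl.injEq] at hc₂
        rw [hc₂]
      omega
    · -- social welfare upper bound
      have hper : ∀ i, ((A i) ∩ univ.image (gw t)).card ≤ 1 := by
        rintro (v|v)
        · rw [card_le_one]
          have hall : ∀ c ∈ A (Sum.inl v) ∩ univ.image (gw t),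
              c = Sum.inl (edg t ⟨(v:ℕ)/2, by have := v.isLt; omega⟩) := by
            intro c hc
            rw [mem_inter, mem_image] at hc
            obtain ⟨hcA, j', _, rfl⟩ := hc
            by_cases hj'0 : (j':ℕ) = 0
            · rw [hgw0 j' hj'0] at hcA
              exact absurd hcA (h3 _ _)
            · by_cases hj'lt : (j':ℕ) < 4*t^2+1
              · rw [hgwE j' hj'0 hj'lt] at hcA ⊢
                rw [h1] at hcA
                have hmm := mem_edg.1 hcA.1
                simp only [Fin.val_mk] at hmm
                exact congrArg Sum.inl (congrArg (edg t)
                  (Fin.ext (by simp only [Fin.val_mk]; omega)))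
              · rw [hgwD j' hj'lt] at hcA
                rw [h1] at hcA
                exact absurd (Sym2.diag_isDiag _) hcA.2
          intro a ha b hb
          rw [hall a ha, hall b hb]
        · rw [card_le_one]
          have hall : ∀ c ∈ A (Sum.inr v) ∩ univ.image (gw t),
              c = Sum.inr (Sum.inr (⟨0, by omega⟩ : Fin (4*t^2))) := by
            intro c hc
            rw [mem_inter, mem_image] at hc
            obtain ⟨hcA, j', _, rfl⟩ := hc
            by_cases hj'0 : (j':ℕ) = 0
            · rw [hgw0 j' hj'0]
            · by_cases hj'lt : (j':ℕ) < 4*t^2+1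
              · rw [hgwE j' hj'0 hj'lt] at hcA
                exact absurd hcA (h4 _ _)
              · rw [hgwD j' hj'lt] at hcA
                exact absurd hcA (h4 _ _)
          intro a ha b hb
          rw [hall a ha, hall b hb]
      calc swF A (univ.image (gw t)) ≤ ∑ _i : Fin (8*t^2) ⊕ Fin (8*t^2), 1 :=
            Finset.sum_le_sum fun i _ => hper i
        _ = 16*t^2 := by simp [Fintype.card_sum]; ring
        _ ≤ 32*t^2 := by nlinarith
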